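/- For every P-automaton there exists a P-automaton without silent transitions (i.e. in which no transition is labelled by an identity discrete ipomset) that recognizes the same language. -/

import Mathlib

open scoped Classical

namespace HDA

/-! ### Ipomsets over a fixed alphabet -/

structure PreIpomset (σ : Type) : Type 1 where
  carrier : Type
  fin : Finite carrier
  lt : carrier → carrier → Prop
  evord : carrier → carrier → Prop
  S : Set carrier
  T : Set carrier
  lab : carrier → σ

namespace PreIpomset

variable {σ : Type}

/-- The precedence order is empty. -/
def Discrete (P : PreIpomset σ) : Prop := ∀ x y, ¬ P.lt x y

/-- Validity: `lt` is a strict partial order which is an interval order, `evord` is acyclic,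
for distinct events exactly one of the four relations holds, sources are minimal and
targets are maximal.  (All ipomsets considered are interval.) -/
structure IsIpomset (P : PreIpomset σ) : Prop where
  lt_trans : ∀ x y z, P.lt x y → P.lt y z → P.lt x z
  lt_irrefl : ∀ x, ¬ P.lt x x
  evord_acyclic : ∀ x, ¬ Relation.TransGen P.evord x x
  total : ∀ x y : P.carrier, x ≠ y → P.lt x y ∨ P.lt y x ∨ P.evord x y ∨ P.evord y x
  lt_not_evord : ∀ x y, P.lt x y → ¬ P.evord x y ∧ ¬ P.evord y x
  src_min : ∀ x ∈ P.S, ∀ y, ¬ P.lt y x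
  tgt_max : ∀ x ∈ P.T, ∀ y, ¬ P.lt x y
  interval : ∀ w x y z, P.lt w x → P.lt y z → P.lt w z ∨ P.lt y x

/-- A conclist: a discrete ipomset with empty interfaces. -/
def IsConclist (P : PreIpomset σ) : Prop :=
  P.IsIpomset ∧ P.Discrete ∧ P.S = ∅ ∧ P.T = ∅

/-- A starter `⟨U∖A,U,U⟩`. -/
def IsStarter (P : PreIpomset σ) : Prop := P.IsIpomset ∧ P.Discrete ∧ P.T = Set.univ

/-- A terminator `⟨U,U,U∖B⟩`. -/
def IsTerminator (P : PreIpomset σ) : Prop := P.IsIpomset ∧ P.Discrete ∧ P.S = Set.univ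

/-- An identity `⟨U,U,U⟩`. -/
def IsIdentityIpomset (P : PreIpomset σ) : Prop :=
  P.IsIpomset ∧ P.Discrete ∧ P.S = Set.univ ∧ P.T = Set.univ

def IsProperStarter (P : PreIpomset σ) : Prop := P.IsStarter ∧ P.S ≠ Set.univ

def IsProperTerminator (P : PreIpomset σ) : Prop := P.IsTerminator ∧ P.T ≠ Set.univ

/-- Isomorphism of (pre)ipomsets. -/
def Iso (P Q : PreIpomset σ) : Prop :=
  ∃ f : P.carrier ≃ Q.carrier,
    (∀ x y, P.lt x y ↔ Q.lt (f x) (f y)) ∧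
    (∀ x y, P.evord x y ↔ Q.evord (f x) (f y)) ∧
    (∀ x, x ∈ P.S ↔ f x ∈ Q.S) ∧
    (∀ x, x ∈ P.T ↔ f x ∈ Q.T) ∧
    (∀ x, Q.lab (f x) = P.lab x)

/-- Restriction to a subset of events, with empty interfaces. -/
def restrict (P : PreIpomset σ) (K : Set P.carrier) : PreIpomset σ where
  carrier := {x : P.carrier // x ∈ K}
  fin := by haveI := P.fin; exact inferInstance
  lt := fun x y => P.lt x.val y.val
  evord := fun x y => P.evord x.val y.val
  S := ∅
  T := ∅
  lab := fun x => P.lab x.val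

/-- The source interface of `P` as a conclist. -/
def srcIface (P : PreIpomset σ) : PreIpomset σ := P.restrict P.S

/-- The target interface of `P` as a conclist. -/
def tgtIface (P : PreIpomset σ) : PreIpomset σ := P.restrict P.T

/-- The underlying conclist (forget interfaces). -/
def conclistOf (P : PreIpomset σ) : PreIpomset σ := { P with S := ∅, T := ∅ }

/-- The identity ipomset `⟨U,U,U⟩` on the conclist underlying `P`. -/
def idOf (P : PreIpomset σ) : PreIpomset σ := { P with S := Set.univ, T := Set.univ }

/-- The discrete ipomset `⟨S,U,T⟩` on the conclist underlying `P`. -/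
def withIfaces (P : PreIpomset σ) (S T : Set P.carrier) : PreIpomset σ :=
  { P with S := S, T := T }

/-- The starter `⟨U∖A,U,U⟩` on the conclist underlying `P`. -/
def starter (P : PreIpomset σ) (A : Set P.carrier) : PreIpomset σ :=
  { P with S := Aᶜ, T := Set.univ }

/-- The terminator `⟨U,U,U∖B⟩` on the conclist underlying `P`. -/
def terminator (P : PreIpomset σ) (B : Set P.carrier) : PreIpomset σ :=
  { P with S := Set.univ, T := Bᶜ }

/-- A matching `T_P ≅ S_Q`, i.e. an isomorphism of interface conclists
along which `P` and `Q` may be glued. -/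
structure Matching (P Q : PreIpomset σ) : Type where
  g : {x : P.carrier // x ∈ P.T} ≃ {y : Q.carrier // y ∈ Q.S}
  evord_iff : ∀ x y, P.evord x.val y.val ↔ Q.evord (g x).val (g y).val
  lab_eq : ∀ x, Q.lab (g x).val = P.lab x.val

def gluePOf (P Q : PreIpomset σ) :
    P.carrier ⊕ {y : Q.carrier // y ∉ Q.S} → Option P.carrier
  | Sum.inl x => some x
  | Sum.inr _ => none

noncomputable def glueQOf (P Q : PreIpomset σ) (m : Matching P Q) :
    P.carrier ⊕ {y : Q.carrier // y ∉ Q.S} → Option Q.carrier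
  | Sum.inl x => if h : x ∈ P.T then some (m.g ⟨x, h⟩).val else none
  | Sum.inr y => some y.val

/-- The gluing `P * Q` along a matching `T_P ≅ S_Q`. -/
noncomputable def glue (P Q : PreIpomset σ) (m : Matching P Q) : PreIpomset σ where
  carrier := P.carrier ⊕ {y : Q.carrier // y ∉ Q.S}
  fin := by haveI := P.fin; haveI := Q.fin; exact inferInstance
  lt := fun u v =>
    (∃ x x', gluePOf P Q u = some x ∧ gluePOf P Q v = some x' ∧ P.lt x x') ∨
    (∃ y y', glueQOf P Q m u = some y ∧ glueQOf P Q m v = some y' ∧ Q.lt y y') ∨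
    ((∃ x, gluePOf P Q u = some x ∧ x ∉ P.T) ∧
     (∃ y, glueQOf P Q m v = some y ∧ y ∉ Q.S))
  evord := fun u v =>
    (∃ x x', gluePOf P Q u = some x ∧ gluePOf P Q v = some x' ∧ P.evord x x') ∨
    (∃ y y', glueQOf P Q m u = some y ∧ glueQOf P Q m v = some y' ∧ Q.evord y y')
  S := {u | ∃ x, gluePOf P Q u = some x ∧ x ∈ P.S}
  T := {u | ∃ y, glueQOf P Q m u = some y ∧ y ∈ Q.T}
  lab := Sum.elim P.lab fun y => Q.lab y.val

/-- `R` is (isomorphic to) the gluing `P * Q`; in particular `T_P ≅ S_Q`. -/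
def GlueRel (P Q R : PreIpomset σ) : Prop :=
  ∃ m : Matching P Q, Iso (glue P Q m) R

/-- A choice of gluing (used when a matching is known to exist). -/
noncomputable def glueChoice (P Q : PreIpomset σ) : PreIpomset σ :=
  if h : Nonempty (Matching P Q) then glue P Q h.some else P

/-- `GluesTo l R`: `R` is the gluing of the nonempty list `l` of ipomsets. -/
inductive GluesTo : List (PreIpomset σ) → PreIpomset σ → Prop
  | single {P R : PreIpomset σ} : Iso P R → GluesTo [P] R
  | cons {P : PreIpomset σ} {l : List (PreIpomset σ)} {R' R : PreIpomset σ} :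
      GluesTo l R' → GlueRel P R' R → GluesTo (P :: l) R

/-- Proper starters and proper terminators alternate. -/
def Alternating (l : List (PreIpomset σ)) : Prop :=
  l.Chain' fun P Q => (IsProperStarter P ∧ IsProperTerminator Q) ∨
    (IsProperTerminator P ∧ IsProperStarter Q)

/-- `l` is a sparse step decomposition of `R`: either a single identity, or an
alternating sequence of proper starters and proper terminators gluing to `R`. -/
def IsSparseDecomp (l : List (PreIpomset σ)) (R : PreIpomset σ) : Prop :=
  GluesTo l R ∧
  ((∃ I, l = [I] ∧ IsIdentityIpomset I) ∨
   ((∀ P ∈ l, IsProperStarter P ∨ IsProperTerminator P) ∧ Alternating l))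

/-- `P ∈ iPoms^q`: the sparse step decomposition of `P` does not end with a
proper starter (i.e. it ends with a terminator or is a single identity). -/
def InQ (P : PreIpomset σ) : Prop :=
  ∃ l, IsSparseDecomp l P ∧ ∀ Q, l.getLast? = some Q → ¬ IsProperStarter Q

end PreIpomset

open PreIpomset

variable {σ : Type}

/-! ### Languages and rational operations -/

def glueLang (L M : Set (PreIpomset σ)) : Set (PreIpomset σ) :=
  {R | ∃ P ∈ L, ∃ Q ∈ M, GlueRel P Q R}

def powLang (L : Set (PreIpomset σ)) : ℕ → Set (PreIpomset σ)
  | 0 => L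
  | n + 1 => glueLang L (powLang L n)

/-- `L⁺ = ⋃_{n ≥ 1} Lⁿ`. -/
def plusLang (L : Set (PreIpomset σ)) : Set (PreIpomset σ) := ⋃ n, powLang L n

/-- Rational languages of (interval) ipomsets: generated from `∅` and singletons
(up to isomorphism) of starters and terminators by union, gluing composition and plus. -/
inductive Rational : Set (PreIpomset σ) → Prop
  | empty : Rational ∅
  | single {P : PreIpomset σ} : IsStarter P ∨ IsTerminator P → Rational {Q | Iso Q P}
  | union {L M : Set (PreIpomset σ)} : Rational L → Rational M → Rational (L ∪ M)
  | concat {L M : Set (PreIpomset σ)} : Rational L → Rational M → Rational (glueLang L M)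
  | plus {L : Set (PreIpomset σ)} : Rational L → Rational (plusLang L)

/-! ### P-automata -/

structure PAutomaton (σ : Type) : Type 1 where
  Q : Type
  E : Type
  src : E → Q
  tgt : E → Q
  lab : E → PreIpomset σ
  mu : Q → PreIpomset σ
  start : Set Q
  accept : Set Q

namespace PAutomaton

variable {σ : Type}

/-- The axioms of a P-automaton: finite sets of states and transitions, states
labelled by conclists, transitions by interval ipomsets, with
`μ(s(e)) ≅ S_{λ(e)}` and `μ(t(e)) ≅ T_{λ(e)}`. -/
def IsPA (A : PAutomaton σ) : Prop :=
  Finite A.Q ∧ Finite A.E ∧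
  (∀ q, (A.mu q).IsConclist) ∧ (∀ e, (A.lab e).IsIpomset) ∧
  (∀ e, Iso (A.lab e).srcIface (A.mu (A.src e))) ∧
  (∀ e, Iso (A.lab e).tgtIface (A.mu (A.tgt e)))

/-- ST-automaton: every label is a starter or a terminator. -/
def IsST (A : PAutomaton σ) : Prop := ∀ e, IsStarter (A.lab e) ∨ IsTerminator (A.lab e)

/-- gST-automaton: every label is discrete. -/
def IsGST (A : PAutomaton σ) : Prop := ∀ e, (A.lab e).Discrete

/-- No transition is labelled by an identity. -/
def NoSilent (A : PAutomaton σ) : Prop := ∀ e, ¬ IsIdentityIpomset (A.lab e)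

/-- A reduced gST-automaton: no silent transitions and conditions (a)–(f). -/
def Reduced (A : PAutomaton σ) : Prop :=
  NoSilent A ∧
  (∀ e, A.tgt e ∉ A.start) ∧
  (∀ e, A.src e ∉ A.accept) ∧
  (∀ e, (A.lab e).T = Set.univ → A.tgt e ∈ A.accept) ∧
  (∀ e, (A.lab e).S = Set.univ → A.src e ∈ A.start) ∧
  (∀ e e', A.src e ∈ A.start → A.src e' = A.src e → e' = e) ∧
  (∀ e e', A.tgt e ∈ A.accept → A.tgt e' = A.tgt e → e' = e)

/-- Paths in a P-automaton, from a state to a state. -/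
inductive Path (A : PAutomaton σ) : A.Q → A.Q → Type
  | nil (q : A.Q) : Path A q q
  | cons (e : A.E) {r : A.Q} (rest : Path A (A.tgt e) r) : Path A (A.src e) r

/-- The (interval) ipomset recognized by a path, up to isomorphism:
the gluing of the labels of its transitions (an identity for a constant path). -/
inductive Rec {A : PAutomaton σ} : ∀ {p r : A.Q}, Path A p r → PreIpomset σ → Prop
  | nil (q : A.Q) (R : PreIpomset σ) : Iso (A.mu q).idOf R → Rec (Path.nil q) R
  | cons (e : A.E) {r : A.Q} (rest : Path A (A.tgt e) r) {R' R : PreIpomset σ} :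
      Rec rest R' → GlueRel (A.lab e) R' R → Rec (Path.cons e rest) R

/-- The language of a P-automaton. -/
def lang (A : PAutomaton σ) : Set (PreIpomset σ) :=
  {R | ∃ p r, ∃ α : Path A p r, p ∈ A.start ∧ r ∈ A.accept ∧ Rec α R}

/-- Dimension of a transition. -/
noncomputable def dim (A : PAutomaton σ) (e : A.E) : ℕ := Nat.card (A.lab e).carrier

/-- Number of bad starter transitions of dimension `n`. -/
noncomputable def bst (A : PAutomaton σ) (n : ℕ) : ℕ :=
  Nat.card {e : A.E // IsProperStarter (A.lab e) ∧ A.tgt e ∉ A.accept ∧ A.dim e = n}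

/-- Number of bad terminator transitions of dimension `n`. -/
noncomputable def btt (A : PAutomaton σ) (n : ℕ) : ℕ :=
  Nat.card {e : A.E // IsProperTerminator (A.lab e) ∧ A.src e ∉ A.start ∧ A.dim e = n}

/-- The automaton `𝒜_c`: remove the starter transition `c`; for every transition `e`
out of `t(c)` add a transition `e*` from `s(c)` to `t(e)` labelled `λ(c) * λ(e)`. -/
noncomputable def Ac (A : PAutomaton σ) (c : A.E) : PAutomaton σ where
  Q := A.Q
  E := {e : A.E // e ≠ c} ⊕ {e : A.E // A.src e = A.tgt c}
  src := Sum.elim (fun e => A.src e.val) fun _ => A.src c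
  tgt := Sum.elim (fun e => A.tgt e.val) fun e => A.tgt e.val
  lab := Sum.elim (fun e => A.lab e.val) fun e => glueChoice (A.lab c) (A.lab e.val)
  mu := A.mu
  start := A.start
  accept := A.accept

/-- Disjoint union of two P-automata. -/
def sumAut (A B : PAutomaton σ) : PAutomaton σ where
  Q := A.Q ⊕ B.Q
  E := A.E ⊕ B.E
  src := Sum.elim (Sum.inl ∘ A.src) (Sum.inr ∘ B.src)
  tgt := Sum.elim (Sum.inl ∘ A.tgt) (Sum.inr ∘ B.tgt)
  lab := Sum.elim A.lab B.lab
  mu := Sum.elim A.mu B.mu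
  start := Sum.inl '' A.start ∪ Sum.inr '' B.start
  accept := Sum.inl '' A.accept ∪ Sum.inr '' B.accept

/-- Concatenation `𝒜 * ℬ`: disjoint union together with identity-labelled transitions
from accepting states of `𝒜` to initial states of `ℬ` with isomorphic state labels. -/
def concatAut (A B : PAutomaton σ) : PAutomaton σ where
  Q := A.Q ⊕ B.Q
  E := A.E ⊕ B.E ⊕
    {pq : A.Q × B.Q // pq.1 ∈ A.accept ∧ pq.2 ∈ B.start ∧ Iso (A.mu pq.1) (B.mu pq.2)}
  src := Sum.elim (Sum.inl ∘ A.src)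
    (Sum.elim (Sum.inr ∘ B.src) fun pq => Sum.inl pq.val.1)
  tgt := Sum.elim (Sum.inl ∘ A.tgt)
    (Sum.elim (Sum.inr ∘ B.tgt) fun pq => Sum.inr pq.val.2)
  lab := Sum.elim A.lab (Sum.elim B.lab fun pq => (A.mu pq.val.1).idOf)
  mu := Sum.elim A.mu B.mu
  start := Sum.inl '' A.start
  accept := Sum.inr '' B.accept

/-- Kleene plus `𝒜⁺`: add identity-labelled transitions from accepting states
to initial states with isomorphic state labels. -/
def plusAut (A : PAutomaton σ) : PAutomaton σ where
  Q := A.Q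
  E := A.E ⊕
    {pq : A.Q × A.Q // pq.1 ∈ A.accept ∧ pq.2 ∈ A.start ∧ Iso (A.mu pq.1) (A.mu pq.2)}
  src := Sum.elim A.src fun pq => pq.val.1
  tgt := Sum.elim A.tgt fun pq => pq.val.2
  lab := Sum.elim A.lab fun pq => (A.mu pq.val.1).idOf
  mu := A.mu
  start := A.start
  accept := A.accept

end PAutomaton

/-! ### Partial HDAs -/

/-- `g` exhibits `V` as the sub-conclist of `U` obtained by removing the events in `K`. -/
def IsFaceEmbed (U : PreIpomset σ) (K : Set U.carrier) (V : PreIpomset σ)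
    (g : V.carrier → U.carrier) : Prop :=
  Function.Injective g ∧ Set.range g = Kᶜ ∧
  (∀ u v, V.evord u v ↔ U.evord (g u) (g v)) ∧
  (∀ u, U.lab (g u) = V.lab u)

/-- The data of a partial higher-dimensional automaton: cells labelled by conclists,
partial face maps, initial and accepting cells. -/
structure PrePHDA (σ : Type) : Type 1 where
  cell : Type
  ev : cell → PreIpomset σ
  face : (x : cell) → Set (ev x).carrier → Set (ev x).carrier → Option cell
  start : Set cell
  accept : Set cell

namespace PrePHDA

variable {σ : Type}

/-- The lax precubical identity: whenever `δ_{A,B}(x)` and `δ_{C,D}(δ_{A,B}(x))` are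
defined, `δ_{A∪C,B∪D}(x)` is defined and equal to the composite. -/
def IsLax (X : PrePHDA σ) : Prop :=
  ∀ x (A B : Set (X.ev x).carrier) y, X.face x A B = some y →
    ∀ g, IsFaceEmbed (X.ev x) (A ∪ B) (X.ev y) g →
      ∀ (C D : Set (X.ev y).carrier) z, X.face y C D = some z →
        X.face x (A ∪ g '' C) (B ∪ g '' D) = some z

/-- The axioms of a partial HDA. -/
def IsPHDA (X : PrePHDA σ) : Prop :=
  (∀ x, (X.ev x).IsConclist) ∧
  (∀ x, X.face x ∅ ∅ = some x) ∧
  (∀ x A B y, X.face x A B = some y →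
    Disjoint A B ∧ ∃ g, IsFaceEmbed (X.ev x) (A ∪ B) (X.ev y) g) ∧
  IsLax X

/-- Strictness: `δ_{C,D} ∘ δ_{A,B} = δ_{A∪C,B∪D}` as partial functions. -/
def IsStrict (X : PrePHDA σ) : Prop :=
  IsPHDA X ∧
  (∀ x (A B : Set (X.ev x).carrier) y, X.face x A B = some y →
    ∀ g, IsFaceEmbed (X.ev x) (A ∪ B) (X.ev y) g →
      ∀ C D : Set (X.ev y).carrier,
        X.face x (A ∪ g '' C) (B ∪ g '' D) = X.face y C D) ∧
  (∀ x (A B C D : Set (X.ev x).carrier),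
    Disjoint (A ∪ C) (B ∪ D) → C ∪ D ⊆ (A ∪ B)ᶜ →
    X.face x A B = none → X.face x (A ∪ C) (B ∪ D) = none)

/-- Paths in a partial HDA: sequences of upsteps and downsteps. -/
inductive Path (X : PrePHDA σ) : X.cell → X.cell → Type
  | nil (x : X.cell) : Path X x x
  | up {x z : X.cell} (y : X.cell) (A : Set (X.ev y).carrier)
      (h : X.face y A ∅ = some x) (rest : Path X y z) : Path X x z
  | down {z w : X.cell} (y : X.cell) (B : Set (X.ev y).carrier)
      (h : X.face y ∅ B = some z) (rest : Path X z w) : Path X y w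

/-- Directions of the steps of a path (`true` = upstep). -/
def Path.dirs {X : PrePHDA σ} : {x z : X.cell} → Path X x z → List Bool
  | _, _, .nil _ => []
  | _, _, .up _ _ _ rest => true :: rest.dirs
  | _, _, .down _ _ _ rest => false :: rest.dirs

/-- A path is sparse if upsteps and downsteps alternate. -/
def Path.Sparse {X : PrePHDA σ} {x z : X.cell} (α : Path X x z) : Prop :=
  α.dirs.Chain' (· ≠ ·)

/-- Concatenation of paths. -/
def Path.comp {X : PrePHDA σ} : {x y z : X.cell} → Path X x y → Path X y z → Path X x z
  | _, _, _, .nil _, β => β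
  | _, _, _, .up y A h rest, β => .up y A h (rest.comp β)
  | _, _, _, .down y B h rest, β => .down y B h (rest.comp β)

/-- The ipomset recognized by a path, up to isomorphism: the gluing of the starters
and terminators of its steps (an identity for a constant path). -/
inductive Rec {X : PrePHDA σ} : ∀ {x z : X.cell}, Path X x z → PreIpomset σ → Prop
  | nil (x : X.cell) (R : PreIpomset σ) :
      Iso (X.ev x).idOf R → Rec (Path.nil x) R
  | up {x z : X.cell} (y : X.cell) (A : Set (X.ev y).carrier)
      (h : X.face y A ∅ = some x) (rest : Path X y z) {R' R : PreIpomset σ} :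
      Rec rest R' → GlueRel ((X.ev y).starter A) R' R → Rec (Path.up y A h rest) R
  | down {z w : X.cell} (y : X.cell) (B : Set (X.ev y).carrier)
      (h : X.face y ∅ B = some z) (rest : Path X z w) {R' R : PreIpomset σ} :
      Rec rest R' → GlueRel ((X.ev y).terminator B) R' R → Rec (Path.down y B h rest) R

/-- The language of a partial HDA. -/
def lang (X : PrePHDA σ) : Set (PreIpomset σ) :=
  {R | ∃ x z, ∃ α : Path X x z, x ∈ X.start ∧ z ∈ X.accept ∧ Rec α R}

/-- `X(K,P)`: cells reachable from `K` by a path recognizing `P`. -/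
def track (X : PrePHDA σ) (K : Set X.cell) (P : PreIpomset σ) : Set X.cell :=
  {x | ∃ s, ∃ α : Path X s x, s ∈ K ∧ Rec α P}

/-- Deterministic partial HDA: at most one initial cell per conclist, and lower
face maps are "injective" in the appropriate sense. -/
def Deterministic (X : PrePHDA σ) : Prop :=
  (∀ x y, x ∈ X.start → y ∈ X.start → Iso (X.ev x) (X.ev y) → x = y) ∧
  (∀ (y y' : X.cell) (A : Set (X.ev y).carrier) (A' : Set (X.ev y').carrier)
      (x : X.cell), X.face y A ∅ = some x → X.face y' A' ∅ = some x →
    (∃ f : (X.ev y).carrier ≃ (X.ev y').carrier,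
      (∀ u v, (X.ev y).evord u v ↔ (X.ev y').evord (f u) (f v)) ∧
      (∀ u, (X.ev y').lab (f u) = (X.ev y).lab u) ∧ f '' A = A') → y = y')

end PrePHDA

/-! ### Relational HDAs -/

/-- The data of a relational HDA: face relations instead of partial face maps. -/
structure PreRHDA (σ : Type) : Type 1 where
  cell : Type
  ev : cell → PreIpomset σ
  face : (x : cell) → Set (ev x).carrier → Set (ev x).carrier → Set cell
  start : Set cell
  accept : Set cell

namespace PreRHDA

variable {σ : Type}

/-- The axioms of a relational HDA, with the lax precubical identity
`δ_{C,D} ∘ δ_{A,B} ⊆ δ_{A∪C,B∪D}`. -/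
def IsRHDA (X : PreRHDA σ) : Prop :=
  (∀ x, (X.ev x).IsConclist) ∧
  (∀ x, X.face x ∅ ∅ = {x}) ∧
  (∀ x A B y, y ∈ X.face x A B →
    Disjoint A B ∧ ∃ g, IsFaceEmbed (X.ev x) (A ∪ B) (X.ev y) g) ∧
  (∀ x (A B : Set (X.ev x).carrier) y, y ∈ X.face x A B →
    ∀ g, IsFaceEmbed (X.ev x) (A ∪ B) (X.ev y) g →
      ∀ (C D : Set (X.ev y).carrier) z, z ∈ X.face y C D →
        z ∈ X.face x (A ∪ g '' C) (B ∪ g '' D))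

/-- Paths in a relational HDA. -/
inductive Path (X : PreRHDA σ) : X.cell → X.cell → Type 1
  | nil (x : X.cell) : Path X x x
  | up {x z : X.cell} (y : X.cell) (A : Set (X.ev y).carrier)
      (h : x ∈ X.face y A ∅) (rest : Path X y z) : Path X x z
  | down {z w : X.cell} (y : X.cell) (B : Set (X.ev y).carrier)
      (h : z ∈ X.face y ∅ B) (rest : Path X z w) : Path X y w

/-- The ipomset recognized by a path in a relational HDA. -/
inductive Rec {X : PreRHDA σ} : ∀ {x z : X.cell}, Path X x z → PreIpomset σ → Prop
  | nil (x : X.cell) (R : PreIpomset σ) :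
      Iso (X.ev x).idOf R → Rec (Path.nil x) R
  | up {x z : X.cell} (y : X.cell) (A : Set (X.ev y).carrier)
      (h : x ∈ X.face y A ∅) (rest : Path X y z) {R' R : PreIpomset σ} :
      Rec rest R' → GlueRel ((X.ev y).starter A) R' R → Rec (Path.up y A h rest) R
  | down {z w : X.cell} (y : X.cell) (B : Set (X.ev y).carrier)
      (h : z ∈ X.face y ∅ B) (rest : Path X z w) {R' R : PreIpomset σ} :
      Rec rest R' → GlueRel ((X.ev y).terminator B) R' R → Rec (Path.down y B h rest) R

/-- The language of a relational HDA. -/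
def lang (X : PreRHDA σ) : Set (PreIpomset σ) :=
  {R | ∃ x z, ∃ α : Path X x z, x ∈ X.start ∧ z ∈ X.accept ∧ Rec α R}

/-- The ST-automaton `ST(X)` of a relational HDA `X`: states are cells, transitions
mimic the starting and terminating of events. -/
def stAut (X : PreRHDA σ) : PAutomaton σ where
  Q := X.cell
  E := (Σ q : X.cell, Σ A : Set (X.ev q).carrier, {p : X.cell // p ∈ X.face q A ∅}) ⊕
       (Σ q : X.cell, Σ B : Set (X.ev q).carrier, {r : X.cell // r ∈ X.face q ∅ B})
  src := Sum.elim (fun t => t.2.2.val) fun t => t.1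
  tgt := Sum.elim (fun t => t.1) fun t => t.2.2.val
  lab := Sum.elim (fun t => (X.ev t.1).starter t.2.1) fun t => (X.ev t.1).terminator t.2.1
  mu := X.ev
  start := X.start
  accept := X.accept

end PreRHDA

/-! ### The partial HDA of a reduced gST-automaton -/

open PAutomaton

/-- The cell representing a state `q` in `X(𝒜)`: `q` is merged with a terminator
transition out of it or a starter transition into it, if such exists. -/
noncomputable def cellOfState (A : PAutomaton σ) (q : A.Q) : A.E ⊕ A.Q :=
  if h : ∃ e, IsTerminator (A.lab e) ∧ A.src e = q then Sum.inl h.choose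
  else if h' : ∃ e, IsStarter (A.lab e) ∧ A.tgt e = q then Sum.inl h'.choose
  else Sum.inr q

/-- `X(𝒜)`: cells are `(Q ⊔ E)/∼`, with the only defined (nontrivial) face maps
`δ⁰_{U∖S}([e]) = [s(e)]` and `δ¹_{U∖T}([e]) = [t(e)]` for `λ(e) = ⟨S,U,T⟩`. -/
noncomputable def XofA (A : PAutomaton σ) : PrePHDA σ where
  cell := A.E ⊕ A.Q
  ev := Sum.elim (fun e => (A.lab e).conclistOf) A.mu
  face := fun x =>
    match x with
    | Sum.inl e => fun As Bs =>
        if As = ∅ ∧ Bs = ∅ then some (Sum.inl e)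
        else if As = (A.lab e).Sᶜ ∧ Bs = ∅ then some (cellOfState A (A.src e))
        else if As = ∅ ∧ Bs = (A.lab e).Tᶜ then some (cellOfState A (A.tgt e))
        else none
    | Sum.inr q => fun As Bs =>
        if As = ∅ ∧ Bs = ∅ then some (Sum.inr q) else none
  start := cellOfState A '' A.start
  accept := cellOfState A '' A.accept

end HDA

namespace HDA
section NoSilentAux

open PreIpomset PAutomaton

variable {σ : Type}

theorem iso_refl (P : PreIpomset σ) : Iso P P :=
  ⟨Equiv.refl _, fun _ _ => Iff.rfl, fun _ _ => Iff.rfl, fun _ => Iff.rfl,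
    fun _ => Iff.rfl, fun _ => rfl⟩

theorem iso_symm {P Q : PreIpomset σ} (h : Iso P Q) : Iso Q P := by
  obtain ⟨f, h1, h2, h3, h4, h5⟩ := h
  refine ⟨f.symm, fun x y => ?_, fun x y => ?_, fun x => ?_, fun x => ?_, fun x => ?_⟩
  · simpa using (h1 (f.symm x) (f.symm y)).symm
  · simpa using (h2 (f.symm x) (f.symm y)).symm
  · simpa using (h3 (f.symm x)).symm
  · simpa using (h4 (f.symm x)).symm
  · simpa using (h5 (f.symm x)).symm

theorem iso_trans {P Q R : PreIpomset σ} (h : Iso P Q) (h' : Iso Q R) : Iso P R := by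
  obtain ⟨f, h1, h2, h3, h4, h5⟩ := h
  obtain ⟨g, g1, g2, g3, g4, g5⟩ := h'
  exact ⟨f.trans g, fun x y => (h1 x y).trans (g1 _ _), fun x y => (h2 x y).trans (g2 _ _),
    fun x => (h3 x).trans (g3 _), fun x => (h4 x).trans (g4 _),
    fun x => (g5 _).trans (h5 _)⟩

theorem iso_srcIface {P Q : PreIpomset σ} (h : Iso P Q) : Iso P.srcIface Q.srcIface := by
  obtain ⟨f, h1, h2, h3, h4, h5⟩ := h
  exact ⟨f.subtypeEquiv h3, fun x y => h1 x.val y.val, fun x y => h2 x.val y.val,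
    fun x => Iff.rfl, fun x => Iff.rfl, fun x => h5 x.val⟩

theorem iso_idOf {P Q : PreIpomset σ} (h : Iso P Q) : Iso P.idOf Q.idOf := by
  obtain ⟨f, h1, h2, h3, h4, h5⟩ := h
  exact ⟨f, h1, h2, fun x => Iff.rfl, fun x => Iff.rfl, h5⟩

theorem srcIface_idOf_iso {P : PreIpomset σ} (hS : P.S = ∅) (hT : P.T = ∅) :
    Iso P.idOf.srcIface P := by
  refine ⟨Equiv.Set.univ P.carrier, fun x y => Iff.rfl, fun x y => Iff.rfl,
    fun x => ?_, fun x => ?_, fun x => rfl⟩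
  · rw [hS]; exact Iff.rfl
  · rw [hT]; exact Iff.rfl

theorem srcIface_eq_tgtIface {P : PreIpomset σ} (h : P.S = P.T) :
    P.srcIface = P.tgtIface := by
  unfold PreIpomset.srcIface PreIpomset.tgtIface
  rw [h]

/-! Helper `rfl` lemmas about gluing. -/

theorem gluePOf_inl {P Q : PreIpomset σ} (x : P.carrier) :
    gluePOf P Q (Sum.inl x) = some x := rfl

theorem gluePOf_inr {P Q : PreIpomset σ} (y : {y : Q.carrier // y ∉ Q.S}) :
    gluePOf P Q (Sum.inr y) = none := rfl

theorem glueQOf_inl {P Q : PreIpomset σ} (m : Matching P Q) {x : P.carrier} (h : x ∈ P.T) :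
    glueQOf P Q m (Sum.inl x) = some (m.g ⟨x, h⟩).val := dif_pos h

theorem glueQOf_inl_neg {P Q : PreIpomset σ} (m : Matching P Q) {x : P.carrier}
    (h : x ∉ P.T) : glueQOf P Q m (Sum.inl x) = none := dif_neg h

theorem glueQOf_inr {P Q : PreIpomset σ} (m : Matching P Q)
    (y : {y : Q.carrier // y ∉ Q.S}) : glueQOf P Q m (Sum.inr y) = some y.val := rfl

theorem glue_lt_iff {P Q : PreIpomset σ} (m : Matching P Q) (u v : (glue P Q m).carrier) :
    (glue P Q m).lt u v ↔
      ((∃ x x', gluePOf P Q u = some x ∧ gluePOf P Q v = some x' ∧ P.lt x x') ∨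
       (∃ y y', glueQOf P Q m u = some y ∧ glueQOf P Q m v = some y' ∧ Q.lt y y') ∨
       ((∃ x, gluePOf P Q u = some x ∧ x ∉ P.T) ∧
        (∃ y, glueQOf P Q m v = some y ∧ y ∉ Q.S))) := Iff.rfl

theorem glue_evord_iff {P Q : PreIpomset σ} (m : Matching P Q)
    (u v : (glue P Q m).carrier) :
    (glue P Q m).evord u v ↔
      ((∃ x x', gluePOf P Q u = some x ∧ gluePOf P Q v = some x' ∧ P.evord x x') ∨
       (∃ y y', glueQOf P Q m u = some y ∧ glueQOf P Q m v = some y' ∧ Q.evord y y')) :=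
  Iff.rfl

theorem glue_S_mem {P Q : PreIpomset σ} (m : Matching P Q) (u : (glue P Q m).carrier) :
    u ∈ (glue P Q m).S ↔ ∃ x, gluePOf P Q u = some x ∧ x ∈ P.S := Iff.rfl

theorem glue_T_mem {P Q : PreIpomset σ} (m : Matching P Q) (u : (glue P Q m).carrier) :
    u ∈ (glue P Q m).T ↔ ∃ y, glueQOf P Q m u = some y ∧ y ∈ Q.T := Iff.rfl

/-- Gluing an identity on the left gives back the right factor, up to iso. -/
theorem glue_id_iso {P Q : PreIpomset σ} (hD : P.Discrete) (hS : P.S = Set.univ)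
    (hT : P.T = Set.univ) (m : Matching P Q) : Iso (glue P Q m) Q := by
  have hTm : ∀ x : P.carrier, x ∈ P.T := fun x => hT ▸ Set.mem_univ x
  let fwd : (glue P Q m).carrier → Q.carrier :=
    Sum.elim (fun x => (m.g ⟨x, hTm x⟩).val) (fun y => y.val)
  have hq : ∀ u, glueQOf P Q m u = some (fwd u) := by
    rintro (x | y)
    · exact dif_pos (hTm x)
    · rfl
  let back : Q.carrier → (glue P Q m).carrier := fun y =>
    if h : y ∈ Q.S then Sum.inl (m.g.symm ⟨y, h⟩).val else Sum.inr ⟨y, h⟩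
  have li : Function.LeftInverse back fwd := by
    rintro (x | y)
    · show back ((m.g ⟨x, hTm x⟩).val) = Sum.inl x
      rw [show back ((m.g ⟨x, hTm x⟩).val) =
          Sum.inl (m.g.symm ⟨(m.g ⟨x, hTm x⟩).val, (m.g ⟨x, hTm x⟩).2⟩).val from
        dif_pos (m.g ⟨x, hTm x⟩).2]
      rw [Subtype.coe_eta, Equiv.symm_apply_apply]
    · show back y.val = Sum.inr y
      rw [show back y.val = Sum.inr ⟨y.val, y.2⟩ from dif_neg y.2, Subtype.coe_eta]
  have ri : Function.RightInverse back fwd := by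
    intro y
    by_cases h : y ∈ Q.S
    · show fwd (back y) = y
      rw [show back y = Sum.inl (m.g.symm ⟨y, h⟩).val from dif_pos h]
      show (m.g ⟨(m.g.symm ⟨y, h⟩).val, _⟩).val = y
      rw [Subtype.coe_eta, Equiv.apply_symm_apply]
    · show fwd (back y) = y
      rw [show back y = Sum.inr ⟨y, h⟩ from dif_neg h]
      rfl
  refine ⟨⟨fwd, back, li, ri⟩, fun u v => ?_, fun u v => ?_, fun u => ?_,
    fun u => ?_, fun u => ?_⟩
  · rw [glue_lt_iff]
    constructor
    · rintro (⟨x, x', hx, hx', hlt⟩ | ⟨y, y', hy, hy', hlt⟩ | ⟨⟨x, hx, hxT⟩, -⟩)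
      · exact absurd hlt (hD x x')
      · obtain rfl := Option.some.inj ((hq u).symm.trans hy)
        obtain rfl := Option.some.inj ((hq v).symm.trans hy')
        exact hlt
      · exact absurd (hTm x) hxT
    · intro h
      exact Or.inr (Or.inl ⟨fwd u, fwd v, hq u, hq v, h⟩)
  · rw [glue_evord_iff]
    constructor
    · rintro (⟨x, x', hx, hx', hev⟩ | ⟨y, y', hy, hy', hev⟩)
      · match u, hx with
        | Sum.inl a, hx =>
          match v, hx' with
          | Sum.inl b, hx' =>
            obtain rfl := Option.some.inj hx
            obtain rfl := Option.some.inj hx'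
            exact (m.evord_iff ⟨_, hTm _⟩ ⟨_, hTm _⟩).mp hev
      · obtain rfl := Option.some.inj ((hq u).symm.trans hy)
        obtain rfl := Option.some.inj ((hq v).symm.trans hy')
        exact hev
    · intro h
      exact Or.inr ⟨fwd u, fwd v, hq u, hq v, h⟩
  · rw [glue_S_mem]
    match u with
    | Sum.inl x =>
      refine iff_of_true ⟨x, rfl, hS ▸ Set.mem_univ x⟩ ?_
      exact (m.g ⟨x, hTm x⟩).2
    | Sum.inr y =>
      refine iff_of_false ?_ y.2
      rintro ⟨a, ha, -⟩
      simp [gluePOf_inr] at ha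
  · rw [glue_T_mem]
    constructor
    · rintro ⟨y, hy, hyT⟩
      obtain rfl := Option.some.inj ((hq u).symm.trans hy)
      exact hyT
    · intro h
      exact ⟨fwd u, hq u, h⟩
  · match u with
    | Sum.inl x => exact m.lab_eq ⟨x, hTm x⟩
    | Sum.inr y => rfl

/-- The source interface of a gluing is the source interface of the left factor,
provided the right factor has no precedence among its source events. -/
theorem glue_src_iso {P Q : PreIpomset σ} (m : Matching P Q)
    (hQ : ∀ y ∈ Q.S, ∀ y' ∈ Q.S, ¬ Q.lt y y') :
    Iso P.srcIface (glue P Q m).srcIface := by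
  let fwd : {x : P.carrier // x ∈ P.S} → {u : (glue P Q m).carrier // u ∈ (glue P Q m).S} :=
    fun x => ⟨Sum.inl x.val, ⟨x.val, rfl, x.2⟩⟩
  have hbij : Function.Bijective fwd := by
    constructor
    · intro x y h
      exact Subtype.ext (Sum.inl.inj (congrArg Subtype.val h))
    · rintro ⟨u, hu⟩
      obtain ⟨a, ha, haS⟩ := hu
      match u, ha with
      | Sum.inl b, ha =>
        obtain rfl := Option.some.inj ha
        exact ⟨⟨_, haS⟩, rfl⟩
  refine ⟨Equiv.ofBijective fwd hbij, fun x y => ?_, fun x y => ?_, fun x => Iff.rfl,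
    fun x => Iff.rfl, fun x => rfl⟩
  · show P.lt x.val y.val ↔ (glue P Q m).lt (Sum.inl x.val) (Sum.inl y.val)
    refine Iff.trans ?_ (glue_lt_iff m _ _).symm
    constructor
    · intro h
      exact Or.inl ⟨x.val, y.val, rfl, rfl, h⟩
    · rintro (⟨a, b, ha, hb, h⟩ | ⟨a, b, ha, hb, h⟩ | ⟨-, ⟨b, hb, hbS⟩⟩)
      · obtain rfl := Option.some.inj ha
        obtain rfl := Option.some.inj hb
        exact h
      · by_cases hxT : x.val ∈ P.T
        · by_cases hyT : y.val ∈ P.T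
          · rw [glueQOf_inl m hxT] at ha
            rw [glueQOf_inl m hyT] at hb
            obtain rfl := Option.some.inj ha
            obtain rfl := Option.some.inj hb
            exact absurd h (hQ _ (m.g ⟨x.val, hxT⟩).2 _ (m.g ⟨y.val, hyT⟩).2)
          · rw [glueQOf_inl_neg m hyT] at hb
            cases hb
        · rw [glueQOf_inl_neg m hxT] at ha
          cases ha
      · by_cases hyT : y.val ∈ P.T
        · rw [glueQOf_inl m hyT] at hb
          obtain rfl := Option.some.inj hb
          exact absurd (m.g ⟨y.val, hyT⟩).2 hbS
        · rw [glueQOf_inl_neg m hyT] at hb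
          cases hb
  · show P.evord x.val y.val ↔ (glue P Q m).evord (Sum.inl x.val) (Sum.inl y.val)
    refine Iff.trans ?_ (glue_evord_iff m _ _).symm
    constructor
    · intro h
      exact Or.inl ⟨x.val, y.val, rfl, rfl, h⟩
    · rintro (⟨a, b, ha, hb, h⟩ | ⟨a, b, ha, hb, h⟩)
      · obtain rfl := Option.some.inj ha
        obtain rfl := Option.some.inj hb
        exact h
      · by_cases hxT : x.val ∈ P.T
        · by_cases hyT : y.val ∈ P.T
          · rw [glueQOf_inl m hxT] at ha
            rw [glueQOf_inl m hyT] at hb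
            obtain rfl := Option.some.inj ha
            obtain rfl := Option.some.inj hb
            exact (m.evord_iff ⟨x.val, hxT⟩ ⟨y.val, hyT⟩).mpr h
          · rw [glueQOf_inl_neg m hyT] at hb
            cases hb
        · rw [glueQOf_inl_neg m hxT] at ha
          cases ha

end NoSilentAux

section NoSilentAux2

open PreIpomset PAutomaton

variable {σ : Type}

/-- A silent step between states. -/
def SilStep (A : PAutomaton σ) (p q : A.Q) : Prop :=
  ∃ e, IsIdentityIpomset (A.lab e) ∧ A.src e = p ∧ A.tgt e = q

/-- Reachability via silent transitions. -/
def Sil (A : PAutomaton σ) : A.Q → A.Q → Prop := Relation.ReflTransGen (SilStep A)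

theorem sil_mu {A : PAutomaton σ} (hA : A.IsPA) {p q : A.Q} (h : Sil A p q) :
    Iso (A.mu p) (A.mu q) := by
  induction h with
  | refl => exact iso_refl _
  | tail hs hstep ih =>
    obtain ⟨e, hid, hsrc, htgt⟩ := hstep
    refine iso_trans ih ?_
    subst hsrc htgt
    have h1 := hA.2.2.2.2.1 e
    have h2 := hA.2.2.2.2.2 e
    have hST : (A.lab e).S = (A.lab e).T := by rw [hid.2.2.1, hid.2.2.2]
    rw [srcIface_eq_tgtIface hST] at h1
    exact iso_trans (iso_symm h1) h2

theorem rec_iso {A : PAutomaton σ} {p r : A.Q} {α : Path A p r} {R R' : PreIpomset σ}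
    (h : Rec α R) (hiso : Iso R R') : Rec α R' := by
  cases h with
  | nil => exact Rec.nil p R' (iso_trans (by assumption) hiso)
  | @cons e r2 rest R2 R3 hr hg =>
    obtain ⟨m, hm⟩ := hg
    exact Rec.cons e rest hr ⟨m, iso_trans hm hiso⟩

theorem glueRel_id {P R' R : PreIpomset σ} (hid : IsIdentityIpomset P)
    (h : GlueRel P R' R) : Iso R' R := by
  obtain ⟨m, hm⟩ := h
  exact iso_trans (iso_symm (glue_id_iso hid.2.1 hid.2.2.1 hid.2.2.2 m)) hm

/-- The source interface of a recognized ipomset is the conclist of the source state. -/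
theorem rec_src {A : PAutomaton σ} (hA : A.IsPA) {p r : A.Q} {α : Path A p r}
    {R : PreIpomset σ} (h : Rec α R) : Iso R.srcIface (A.mu p) := by
  induction h with
  | nil q R h =>
    exact iso_trans (iso_srcIface (iso_symm h))
      (srcIface_idOf_iso (hA.2.2.1 q).2.2.1 (hA.2.2.1 q).2.2.2)
  | @cons e r2 rest R' R2 hr hg ih =>
    obtain ⟨m, hm⟩ := hg
    have hQ : ∀ y ∈ R'.S, ∀ y' ∈ R'.S, ¬ R'.lt y y' := by
      obtain ⟨f, f1, -, -, -, -⟩ := ih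
      intro y hy y' hy' hlt
      exact (hA.2.2.1 (A.tgt e)).2.1 _ _ ((f1 ⟨y, hy⟩ ⟨y', hy'⟩).mp hlt)
    exact iso_trans (iso_trans (iso_symm (iso_srcIface hm))
        (iso_symm (glue_src_iso m hQ))) (hA.2.2.2.2.1 e)

theorem rec_silent_cons {A : PAutomaton σ} (hA : A.IsPA) {e : A.E}
    (hid : IsIdentityIpomset (A.lab e)) {r : A.Q} {α : Path A (A.tgt e) r}
    {R : PreIpomset σ} (h : Rec α R) : Rec (Path.cons e α) R := by
  obtain ⟨f, f1, f2, f3, f4, f5⟩ :=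
    iso_trans (hA.2.2.2.2.2 e) (iso_symm (rec_src hA h))
  have m : Matching (A.lab e) R := ⟨f, fun x y => f2 x y, fun x => f5 x⟩
  exact Rec.cons e α h ⟨m, glue_id_iso hid.2.1 hid.2.2.1 hid.2.2.2 m⟩

theorem sil_prepend {A : PAutomaton σ} (hA : A.IsPA) {p q r : A.Q} (hs : Sil A p q)
    {α : Path A q r} {R : PreIpomset σ} (h : Rec α R) :
    ∃ β : Path A p r, Rec β R := by
  induction hs using Relation.ReflTransGen.head_induction_on with
  | refl => exact ⟨α, h⟩
  | head hstep _ ih =>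
    obtain ⟨β, hβ⟩ := ih
    obtain ⟨e, hid, hsrc, htgt⟩ := hstep
    subst hsrc htgt
    exact ⟨Path.cons e β, rec_silent_cons hA hid hβ⟩

/-- The silent-transition-free version of `A`. -/
def desil (A : PAutomaton σ) : PAutomaton σ where
  Q := A.Q
  E := {t : A.Q × A.E × A.Q // Sil A t.1 (A.src t.2.1) ∧
        ¬ IsIdentityIpomset (A.lab t.2.1) ∧ Sil A (A.tgt t.2.1) t.2.2}
  src := fun t => t.val.1
  tgt := fun t => t.val.2.2
  lab := fun t => A.lab t.val.2.1
  mu := A.mu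
  start := A.start
  accept := {q | ∃ r ∈ A.accept, Sil A q r}

theorem rec_to_desil {A : PAutomaton σ} (hA : A.IsPA) {p r : A.Q} {α : Path A p r}
    {R : PreIpomset σ} (h : Rec α R) :
    ∀ q, Sil A q p →
      (Sil A q r ∧ Iso (A.mu q).idOf R) ∨
      (∃ β : Path (desil A) q r, Rec β R) := by
  induction h with
  | nil q0 R h =>
    intro q hq
    exact Or.inl ⟨hq, iso_trans (iso_idOf (sil_mu hA hq)) h⟩
  | @cons e rr rest R' R2 hr hg ih =>
    intro q hq
    by_cases hid : IsIdentityIpomset (A.lab e)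
    · have hiso := glueRel_id hid hg
      rcases ih q (hq.tail ⟨e, hid, rfl, rfl⟩) with ⟨hsr, hisoid⟩ | ⟨β, hβ⟩
      · exact Or.inl ⟨hsr, iso_trans hisoid hiso⟩
      · exact Or.inr ⟨β, rec_iso hβ hiso⟩
    · rcases ih (A.tgt e) Relation.ReflTransGen.refl with ⟨hsr, hR'⟩ | ⟨β, hβ⟩
      · refine Or.inr ⟨Path.cons (A := desil A) ⟨(q, e, rr), hq, hid, hsr⟩ (Path.nil (A := desil A) rr), ?_⟩
        refine Rec.cons _ _ (Rec.nil (A := desil A) rr _ ?_) hg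
        exact iso_trans (iso_idOf (iso_symm (sil_mu hA hsr))) hR'
      · exact Or.inr ⟨Path.cons (A := desil A) ⟨(q, e, A.tgt e), hq, hid,
          Relation.ReflTransGen.refl⟩ β, Rec.cons _ _ hβ hg⟩

theorem rec_from_desil {A : PAutomaton σ} (hA : A.IsPA) {p r : (desil A).Q}
    {β : Path (desil A) p r} {R : PreIpomset σ} (h : Rec β R) :
    ∀ r0, Sil A r r0 → ∃ α : Path A p r0, Rec α R := by
  induction h with
  | nil q R hiso =>
    intro r0 hr0
    exact sil_prepend hA hr0 (Rec.nil r0 R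
      (iso_trans (iso_idOf (iso_symm (sil_mu hA hr0))) hiso))
  | cons t rest hr hg ih =>
    intro r0 hr0
    obtain ⟨α', hα'⟩ := ih r0 hr0
    obtain ⟨α'', hα''⟩ := sil_prepend hA t.prop.2.2 hα'
    exact sil_prepend hA t.prop.1 (Rec.cons t.val.2.1 α'' hα'' hg)

end NoSilentAux2

open PreIpomset PAutomaton

/-- For every P-automaton there exists a P-automaton without silent
transitions that recognizes the same language. -/
theorem pautomaton_no_silent {σ : Type} [Finite σ] (A : PAutomaton σ) (hA : A.IsPA) :
    ∃ A' : PAutomaton σ, A'.IsPA ∧ A'.NoSilent ∧ A'.lang = A.lang := by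
  refine ⟨desil A, ⟨hA.1, ?_, hA.2.2.1, fun t => hA.2.2.2.1 _, fun t =>
      iso_trans (hA.2.2.2.2.1 _) (iso_symm (sil_mu hA t.prop.1)), fun t =>
      iso_trans (hA.2.2.2.2.2 _) (sil_mu hA t.prop.2.2)⟩,
    fun t => t.prop.2.1, ?_⟩
  · haveI := hA.1
    haveI := hA.2.1
    show Finite {t : A.Q × A.E × A.Q // Sil A t.1 (A.src t.2.1) ∧
        ¬ IsIdentityIpomset (A.lab t.2.1) ∧ Sil A (A.tgt t.2.1) t.2.2}
    exact inferInstance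
  · ext R
    constructor
    · rintro ⟨p, r, β, hp, ⟨r0, hr0acc, hsil⟩, hrec⟩
      obtain ⟨α, hα⟩ := rec_from_desil hA hrec r0 hsil
      exact ⟨p, r0, α, hp, hr0acc, hα⟩
    · rintro ⟨p, r, α, hp, hr, hrec⟩
      rcases rec_to_desil hA hrec p Relation.ReflTransGen.refl with ⟨hsr, hiso⟩ | ⟨β, hβ⟩
      · exact ⟨p, p, PAutomaton.Path.nil (A := desil A) p, hp, ⟨r, hr, hsr⟩, PAutomaton.Rec.nil (A := desil A) p R hiso⟩
      · exact ⟨p, r, β, hp, ⟨r, hr, Relation.ReflTransGen.refl⟩, hβ⟩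

end HDA
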